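/- Let G = (V₀, V₁; E) be a bipartite graph and let I₀, I₁ ⊆ E be matchings in G. Then there exists a matching I such that for each i ∈ {0,1}, every vertex of Vᵢ covered by Iᵢ is also covered by I. -/

import Mathlib

open Set


/-- **Ore's theorem.** Given matchings `I₀, I₁` in a bipartite graph `G = (V₀, V₁; E)`,
there is a matching `I` with `V(I) ∩ Vᵢ ⊇ V(Iᵢ) ∩ Vᵢ` for `i ∈ {0,1}`. -/
theorem ore_matching {V : Type*} (G : SimpleGraph V) (V₀ V₁ : Set V)
    (hpart : V₀ ∪ V₁ = Set.univ) (hdisj : Disjoint V₀ V₁)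
    (hbip : ∀ ⦃u v⦄, G.Adj u v → (u ∈ V₀ ∧ v ∈ V₁) ∨ (u ∈ V₁ ∧ v ∈ V₀))
    (I₀ I₁ : G.Subgraph) (hI₀ : I₀.IsMatching) (hI₁ : I₁.IsMatching) :
    ∃ I : G.Subgraph, I.IsMatching ∧
      I₀.verts ∩ V₀ ⊆ I.verts ∧ I₁.verts ∩ V₁ ⊆ I.verts := by
  classical
  set f : V → V := fun v => if h : v ∈ I₀.verts then (hI₀ h).choose else v with hfdef
  set g : V → V := fun v => if h : v ∈ I₁.verts then (hI₁ h).choose else v with hgdef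
  have hf : ∀ v (h : v ∈ I₀.verts), I₀.Adj v (f v) := by
    intro v h; simp only [hfdef, dif_pos h]; exact (hI₀ h).choose_spec.1
  have hf' : ∀ v w, v ∈ I₀.verts → I₀.Adj v w → w = f v := by
    intro v w h hadj; simp only [hfdef, dif_pos h]; exact (hI₀ h).choose_spec.2 w hadj
  have hg : ∀ v (h : v ∈ I₁.verts), I₁.Adj v (g v) := by
    intro v h; simp only [hgdef, dif_pos h]; exact (hI₁ h).choose_spec.1
  have hg' : ∀ v w, v ∈ I₁.verts → I₁.Adj v w → w = g v := by
    intro v w h hadj; simp only [hgdef, dif_pos h]; exact (hI₁ h).choose_spec.2 w hadj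
  set A : Set V := I₀.verts ∩ V₀ with hA
  set B : Set V := I₁.verts ∩ V₁ with hB
  -- f maps A into V₁, injectively on I₀.verts
  have hfV₁ : ∀ v ∈ A, f v ∈ V₁ := by
    intro v hv
    rcases hbip (I₀.adj_sub (hf v hv.1)) with ⟨h0, h1⟩ | ⟨h0, h1⟩
    · exact h1
    · exact absurd hv.2 (fun hh => hdisj.ne_of_mem hh h0 rfl)
  have hgV₀ : ∀ v ∈ B, g v ∈ V₀ := by
    intro v hv
    rcases hbip (I₁.adj_sub (hg v hv.1)) with ⟨h0, h1⟩ | ⟨h0, h1⟩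
    · exact absurd hv.2 (fun hh => hdisj.ne_of_mem h0 hh rfl)
    · exact h1
  have hfinj : ∀ x₁ ∈ I₀.verts, ∀ x₂ ∈ I₀.verts, f x₁ = f x₂ → x₁ = x₂ := by
    intro x₁ h₁ x₂ h₂ he
    have a1 : I₀.Adj (f x₁) x₁ := (hf x₁ h₁).symm
    have a2 : I₀.Adj (f x₁) x₂ := he ▸ (hf x₂ h₂).symm
    have hm : f x₁ ∈ I₀.verts := a1.fst_mem
    rw [hf' _ _ hm a1, hf' _ _ hm a2]
  have hginj : ∀ x₁ ∈ I₁.verts, ∀ x₂ ∈ I₁.verts, g x₁ = g x₂ → x₁ = x₂ := by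
    intro x₁ h₁ x₂ h₂ he
    have a1 : I₁.Adj (g x₁) x₁ := (hg x₁ h₁).symm
    have a2 : I₁.Adj (g x₁) x₂ := he ▸ (hg x₂ h₂).symm
    have hm : g x₁ ∈ I₁.verts := a1.fst_mem
    rw [hg' _ _ hm a1, hg' _ _ hm a2]
  -- Knaster–Tarski fixed point
  set Φ : Set V →o Set V := ⟨fun S => A \ (g '' (B \ f '' S)), by
    intro S₁ S₂ h
    exact diff_subset_diff_right (image_mono (diff_subset_diff_right (image_mono h)))⟩
    with hΦ
  set S : Set V := OrderHom.lfp Φ with hS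
  have hfix : A \ (g '' (B \ f '' S)) = S := Φ.map_lfp
  set T : Set V := B \ f '' S with hT
  have hSA : S ⊆ A := by rw [← hfix]; exact diff_subset
  have hTB : T ⊆ B := diff_subset
  have hSgT : ∀ v ∈ S, v ∉ g '' T := by
    intro v hv; rw [← hfix] at hv; exact hv.2
  have hTfS : ∀ v ∈ T, v ∉ f '' S := fun v hv => hv.2
  -- vertex class facts
  have hSV₀ : ∀ v ∈ S, v ∈ V₀ := fun v hv => (hSA hv).2
  have hTV₁ : ∀ v ∈ T, v ∈ V₁ := fun v hv => (hTB hv).2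
  have hfSV₁ : ∀ v ∈ f '' S, v ∈ V₁ := by
    rintro v ⟨x, hx, rfl⟩; exact hfV₁ x (hSA hx)
  have hgTV₀ : ∀ v ∈ g '' T, v ∈ V₀ := by
    rintro v ⟨y, hy, rfl⟩; exact hgV₀ y (hTB hy)
  have hne : ∀ {u v : V}, u ∈ V₀ → v ∈ V₁ → u ≠ v := by
    intro u v h0 h1 h; exact hdisj.ne_of_mem h0 h1 h
  -- the matching subgraph
  refine ⟨⟨S ∪ f '' S ∪ T ∪ g '' T,
    fun u v => (u ∈ S ∧ v = f u) ∨ (v ∈ S ∧ u = f v) ∨ (u ∈ T ∧ v = g u) ∨ (v ∈ T ∧ u = g v),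
    ?_, ?_, ?_⟩, ?_, ?_, ?_⟩
  · rintro u v (⟨h, rfl⟩ | ⟨h, rfl⟩ | ⟨h, rfl⟩ | ⟨h, rfl⟩)
    · exact I₀.adj_sub (hf u (hSA h).1)
    · exact (I₀.adj_sub (hf v (hSA h).1)).symm
    · exact I₁.adj_sub (hg u (hTB h).1)
    · exact (I₁.adj_sub (hg v (hTB h).1)).symm
  · rintro u v (⟨h, rfl⟩ | ⟨h, rfl⟩ | ⟨h, rfl⟩ | ⟨h, rfl⟩)
    · exact Or.inl (Or.inl (Or.inl h))
    · exact Or.inl (Or.inl (Or.inr ⟨v, h, rfl⟩))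
    · exact Or.inl (Or.inr h)
    · exact Or.inr ⟨v, h, rfl⟩
  · refine ⟨?_⟩; rintro u v (⟨h, rfl⟩ | ⟨h, rfl⟩ | ⟨h, rfl⟩ | ⟨h, rfl⟩)
    · exact Or.inr (Or.inl ⟨h, rfl⟩)
    · exact Or.inl ⟨h, rfl⟩
    · exact Or.inr (Or.inr (Or.inr ⟨h, rfl⟩))
    · exact Or.inr (Or.inr (Or.inl ⟨h, rfl⟩))
  · -- IsMatching
    rintro v (((hv | hv) | hv) | hv)
    · refine ⟨f v, Or.inl ⟨hv, rfl⟩, ?_⟩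
      rintro w (⟨_, rfl⟩ | ⟨hw, rfl⟩ | ⟨hv', rfl⟩ | ⟨hw, rfl⟩)
      · rfl
      · exact absurd rfl (hne (hSV₀ _ hv) (hfSV₁ _ ⟨w, hw, rfl⟩))
      · exact absurd rfl (hne (hSV₀ _ hv) (hTV₁ _ hv'))
      · exact absurd ⟨w, hw, rfl⟩ (hSgT _ hv)
    · obtain ⟨x, hx, rfl⟩ := hv
      refine ⟨x, Or.inr (Or.inl ⟨hx, rfl⟩), ?_⟩
      rintro w (⟨hv', rfl⟩ | ⟨hw, he⟩ | ⟨hv', rfl⟩ | ⟨hw, he⟩)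
      · exact absurd rfl (hne (hSV₀ _ hv') (hfSV₁ _ ⟨x, hx, rfl⟩)).symm
      · exact hfinj w (hSA hw).1 x (hSA hx).1 he.symm
      · exact absurd ⟨x, hx, rfl⟩ (hTfS _ hv')
      · exact absurd he.symm (hne (hgV₀ w (hTB hw)) (hfSV₁ _ ⟨x, hx, rfl⟩))
    · refine ⟨g v, Or.inr (Or.inr (Or.inl ⟨hv, rfl⟩)), ?_⟩
      rintro w (⟨hv', rfl⟩ | ⟨hw, rfl⟩ | ⟨_, rfl⟩ | ⟨hw, rfl⟩)
      · exact absurd rfl (hne (hSV₀ _ hv') (hTV₁ _ hv)).symm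
      · exact absurd ⟨w, hw, rfl⟩ (hTfS _ hv)
      · rfl
      · exact absurd rfl (hne (hgTV₀ _ ⟨w, hw, rfl⟩) (hTV₁ _ hv)).symm
    · obtain ⟨y, hy, rfl⟩ := hv
      refine ⟨y, Or.inr (Or.inr (Or.inr ⟨hy, rfl⟩)), ?_⟩
      rintro w (⟨hv', rfl⟩ | ⟨hw, he⟩ | ⟨hv', rfl⟩ | ⟨hw, he⟩)
      · exact absurd ⟨y, hy, rfl⟩ (hSgT _ hv')
      · exact absurd he (hne (hgTV₀ _ ⟨y, hy, rfl⟩) (hfSV₁ _ ⟨w, hw, rfl⟩))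
      · exact absurd rfl (hne (hgTV₀ _ ⟨y, hy, rfl⟩) (hTV₁ _ hv'))
      · exact hginj w (hTB hw).1 y (hTB hy).1 he.symm
  · -- A ⊆ verts
    intro a ha
    by_cases h : a ∈ g '' T
    · exact Or.inr h
    · exact Or.inl (Or.inl (Or.inl (by rw [← hfix]; exact ⟨ha, h⟩)))
  · -- B ⊆ verts
    intro b hb
    by_cases h : b ∈ f '' S
    · exact Or.inl (Or.inl (Or.inr h))
    · exact Or.inl (Or.inr ⟨hb, h⟩)
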